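/- If x_1, ..., x_n are points on the unit sphere S^{d-1} in R^d with n ≥ 2, then the minimum pairwise Euclidean distance min_{i≠j} ||x_i - x_j|| is at most sqrt(2n/(n-1)). -/

import Mathlib

open Finset

theorem rankin_simplex_bound (d n : ℕ) (hn : 2 ≤ n)
    (x : Fin n → EuclideanSpace ℝ (Fin d)) (hx : ∀ i, ‖x i‖ = 1) :
    ∃ i j : Fin n, i ≠ j ∧ ‖x i - x j‖ ≤ Real.sqrt (2 * n / ((n : ℝ) - 1)) := by
  by_contra h
  push_neg at h
  have hn1 : (1 : ℝ) ≤ (n : ℝ) - 1 := by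
    have : (2 : ℝ) ≤ n := by exact_mod_cast hn
    linarith
  have hpos : (0 : ℝ) < (n : ℝ) - 1 := by linarith
  have hinner : ∀ i j : Fin n, i ≠ j →
      (inner ℝ (x i) (x j) : ℝ) < -1 / ((n : ℝ) - 1) := by
    intro i j hij
    have hs := h i j hij
    have hnn : (0 : ℝ) ≤ 2 * n / ((n : ℝ) - 1) := by positivity
    have hsq : 2 * n / ((n : ℝ) - 1) < ‖x i - x j‖ ^ 2 := by
      have := Real.sq_sqrt hnn
      nlinarith [Real.sqrt_nonneg (2 * n / ((n : ℝ) - 1)), norm_nonneg (x i - x j)]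
    have hexp : ‖x i - x j‖ ^ 2 = 2 - 2 * (inner ℝ (x i) (x j) : ℝ) := by
      rw [norm_sub_sq_real, hx i, hx j]; ring
    rw [hexp] at hsq
    rw [div_lt_iff₀ hpos] at hsq
    rw [lt_div_iff₀ hpos]
    nlinarith
  have hS : (0 : ℝ) ≤ ∑ i, ∑ j, (inner ℝ (x i) (x j) : ℝ) := by
    have : ∑ i, ∑ j, (inner ℝ (x i) (x j) : ℝ) = ‖∑ i, x i‖ ^ 2 := by
      rw [← real_inner_self_eq_norm_sq, sum_inner]
      exact Finset.sum_congr rfl fun i _ => by rw [inner_sum]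
    rw [this]; positivity
  have hrow : ∀ i : Fin n, ∑ j, (inner ℝ (x i) (x j) : ℝ) < 0 := by
    intro i
    have hsplit : ∑ j, (inner ℝ (x i) (x j) : ℝ)
        = (inner ℝ (x i) (x i) : ℝ) + ∑ j ∈ univ.erase i, (inner ℝ (x i) (x j) : ℝ) :=
      (Finset.add_sum_erase _ _ (mem_univ i)).symm
    have hone : (inner ℝ (x i) (x i) : ℝ) = 1 := by
      rw [real_inner_self_eq_norm_sq, hx i]; norm_num
    have hne : (univ.erase i).Nonempty := by
      rw [← Finset.card_pos, Finset.card_erase_of_mem (mem_univ i), Finset.card_univ,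
        Fintype.card_fin]
      omega
    have hsum : ∑ j ∈ univ.erase i, (inner ℝ (x i) (x j) : ℝ)
        < ∑ _j ∈ univ.erase i, (-1 / ((n : ℝ) - 1)) := by
      apply Finset.sum_lt_sum_of_nonempty hne
      intro j hj
      exact hinner i j (Finset.ne_of_mem_erase hj).symm
    have hcard : ∑ _j ∈ univ.erase i, (-1 / ((n : ℝ) - 1)) = -1 := by
      rw [Finset.sum_const, Finset.card_erase_of_mem (mem_univ i), Finset.card_univ,
        Fintype.card_fin, nsmul_eq_mul]
      have : ((n - 1 : ℕ) : ℝ) = (n : ℝ) - 1 := by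
        have : 1 ≤ n := by omega
        push_cast [this]; ring
      rw [this]
      field_simp
    rw [hsplit, hone]
    rw [hcard] at hsum
    linarith
  have : ∑ i, ∑ j, (inner ℝ (x i) (x j) : ℝ) < ∑ _i : Fin n, (0 : ℝ) := by
    have : Nonempty (Fin n) := ⟨⟨0, by omega⟩⟩
    apply Finset.sum_lt_sum_of_nonempty univ_nonempty
    intro i _; exact hrow i
  rw [Finset.sum_const, smul_zero] at this
  linarith
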